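/- Integrate-and-fire spike count correctness: fix a threshold θ > 0 and a constant input x with 0 ≤ x ≤ θ. Define V₀ = 0 and at each step i (1 ≤ i ≤ T): V'ᵢ = V_{i-1} + x; if V'ᵢ ≥ θ then sᵢ = 1 and Vᵢ = V'ᵢ − θ, else sᵢ = 0 and Vᵢ = V'ᵢ. Then for all i, Vᵢ = i·x − θ·(Σ_{j≤i} sⱼ) and 0 ≤ Vᵢ < θ; consequently the total spike count satisfies Σ_{i=1}^T sᵢ = ⌊T·x/θ⌋. -/

import Mathlib

/-- Integrate-and-fire spike count correctness: with threshold `θ > 0`, constant input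
`0 ≤ x ≤ θ`, membrane potential `V` and spike train `s` defined by the
integrate-and-fire recursion, we have `Vᵢ = i·x − θ·Σ_{j≤i} sⱼ` with `0 ≤ Vᵢ < θ`, and
the total spike count equals `⌊T·x/θ⌋`. -/
theorem integrate_and_fire_spike_count (θ x : ℝ) (hθ : 0 < θ) (hx0 : 0 ≤ x)
    (hxθ : x ≤ θ) (T : ℕ) (hT : 0 < T) (V : ℕ → ℝ) (s : ℕ → ℕ)
    (hV0 : V 0 = 0)
    (hrec : ∀ i : ℕ,
      (θ ≤ V i + x → s (i + 1) = 1 ∧ V (i + 1) = V i + x - θ) ∧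
      (V i + x < θ → s (i + 1) = 0 ∧ V (i + 1) = V i + x)) :
    (∀ i : ℕ, V i = i * x - θ * ∑ j ∈ Finset.Icc 1 i, (s j : ℝ) ∧
        0 ≤ V i ∧ V i < θ) ∧
    (∑ i ∈ Finset.Icc 1 T, (s i : ℤ)) = ⌊(T : ℝ) * x / θ⌋ := by
  have main : ∀ i : ℕ, V i = i * x - θ * ∑ j ∈ Finset.Icc 1 i, (s j : ℝ) ∧
      0 ≤ V i ∧ V i < θ := by
    intro i
    induction i with
    | zero => simp [hV0, hθ]
    | succ i ih =>
      obtain ⟨hVeq, hV0i, hVθ⟩ := ih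
      have hsum : ∑ j ∈ Finset.Icc 1 (i+1), (s j : ℝ)
          = (∑ j ∈ Finset.Icc 1 i, (s j : ℝ)) + s (i+1) := by
        rw [← Finset.sum_Icc_succ_top (Nat.one_le_iff_ne_zero.mpr (Nat.succ_ne_zero i))]
      rcases le_or_gt θ (V i + x) with h | h
      · obtain ⟨hs, hV⟩ := (hrec i).1 h
        refine ⟨?_, by linarith, by linarith⟩
        rw [hV, hsum, hs, hVeq]
        push_cast
        ring
      · obtain ⟨hs, hV⟩ := (hrec i).2 h
        refine ⟨?_, by linarith, by linarith⟩
        rw [hV, hsum, hs, hVeq]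
        push_cast
        ring
  refine ⟨main, ?_⟩
  obtain ⟨hVeq, hV0T, hVθ⟩ := main T
  have hcast : ((∑ i ∈ Finset.Icc 1 T, (s i : ℤ) : ℤ) : ℝ)
      = ∑ i ∈ Finset.Icc 1 T, (s i : ℝ) := by push_cast; ring
  symm
  rw [Int.floor_eq_iff]
  constructor
  · rw [hcast]
    rw [le_div_iff₀ hθ]
    nlinarith
  · rw [hcast]
    rw [div_lt_iff₀ hθ]
    nlinarith
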